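/- Suppose z ∈ ℂ∖{0} is such that the nonnegative matrix series N1(|z|), G1(|z|) and R1(|z|) converge entrywise, and define H1(z) = A_{*,0}(z) + A_{*,1}(z)·N1(z)·A_{*,−1}(z). Then for every w ∈ ℂ∖{0}: I − C(z,w) = (w^{−1}·I − R1(z)) · (I − H1(z)) · (w·I − G1(z)). -/

import Mathlib

namespace QBDSeries

/-- The index set `H = {-1, 0, 1}`. -/
def Hs : Finset ℤ := {-1, 0, 1}

/-- Partial sum of the first `k` entries of a sequence `σ : Fin n → ℤ`. -/
def psum {n : ℕ} (σ : Fin n → ℤ) (k : ℕ) : ℤ :=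
  ∑ i ∈ Finset.univ.filter (fun i : Fin n => (i : ℕ) < k), σ i

/-- Condition defining the index set `𝓘_n`. -/
def condQ (n : ℕ) (σ : Fin n → ℤ) : Prop :=
  (∀ k : ℕ, 1 ≤ k → k ≤ n - 1 → 0 ≤ psum σ k) ∧ psum σ n = 0

/-- Condition defining the index set `𝓘_{D,n}`. -/
def condD (n : ℕ) (σ : Fin n → ℤ) : Prop :=
  (∀ k : ℕ, 1 ≤ k → k ≤ n - 1 → 0 ≤ psum σ k) ∧ psum σ n = -1

/-- Condition defining the index set `𝓘_{U,n}`. -/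
def condU (n : ℕ) (σ : Fin n → ℤ) : Prop :=
  (∀ k : ℕ, 1 ≤ k → k ≤ n - 1 → 1 ≤ psum σ k) ∧ psum σ n = 1

/-- `A_{*,i}(z) = Σ_{j∈H} A_{j,i} z^j` over `ℂ`. -/
noncomputable def AstarC (s0 : ℕ) (A : ℤ → ℤ → Matrix (Fin s0) (Fin s0) ℝ) (z : ℂ) (i : ℤ) :
    Matrix (Fin s0) (Fin s0) ℂ :=
  ∑ j ∈ Hs, (z ^ j) • (A j i).map Complex.ofReal

/-- `A_{*,i}(z) = Σ_{j∈H} A_{j,i} z^j` over `ℝ`. -/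
noncomputable def AstarR (s0 : ℕ) (A : ℤ → ℤ → Matrix (Fin s0) (Fin s0) ℝ) (z : ℝ) (i : ℤ) :
    Matrix (Fin s0) (Fin s0) ℝ :=
  ∑ j ∈ Hs, (z ^ j) • A j i

open Classical in
/-- `Σ_{σ ∈ cond} A_{*,σ1}(z)⋯A_{*,σn}(z)` over `ℂ`. -/
noncomputable def pathSumC (s0 : ℕ) (A : ℤ → ℤ → Matrix (Fin s0) (Fin s0) ℝ) (z : ℂ) (n : ℕ)
    (cond : (Fin n → ℤ) → Prop) : Matrix (Fin s0) (Fin s0) ℂ :=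
  ∑ σ : Fin n → {x : ℤ // x ∈ Hs},
    if cond (fun k => (σ k : ℤ)) then (List.ofFn fun k : Fin n => AstarC s0 A z (σ k : ℤ)).prod
    else 0

open Classical in
/-- `Σ_{σ ∈ cond} A_{*,σ1}(z)⋯A_{*,σn}(z)` over `ℝ`. -/
noncomputable def pathSumR (s0 : ℕ) (A : ℤ → ℤ → Matrix (Fin s0) (Fin s0) ℝ) (z : ℝ) (n : ℕ)
    (cond : (Fin n → ℤ) → Prop) : Matrix (Fin s0) (Fin s0) ℝ :=
  ∑ σ : Fin n → {x : ℤ // x ∈ Hs},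
    if cond (fun k => (σ k : ℤ)) then (List.ofFn fun k : Fin n => AstarR s0 A z (σ k : ℤ)).prod
    else 0

/-- `Q^{(n)}(z)` (complex); `Q^{(0)}(z) = I`. -/
noncomputable def QmatC (s0 : ℕ) (A : ℤ → ℤ → Matrix (Fin s0) (Fin s0) ℝ) (z : ℂ) (n : ℕ) :
    Matrix (Fin s0) (Fin s0) ℂ := pathSumC s0 A z n (condQ n)

/-- `D^{(n)}(z)` (complex); it vanishes for `n = 0`. -/
noncomputable def DmatC (s0 : ℕ) (A : ℤ → ℤ → Matrix (Fin s0) (Fin s0) ℝ) (z : ℂ) (n : ℕ) :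
    Matrix (Fin s0) (Fin s0) ℂ := pathSumC s0 A z n (condD n)

/-- `U^{(n)}(z)` (complex); it vanishes for `n = 0`. -/
noncomputable def UmatC (s0 : ℕ) (A : ℤ → ℤ → Matrix (Fin s0) (Fin s0) ℝ) (z : ℂ) (n : ℕ) :
    Matrix (Fin s0) (Fin s0) ℂ := pathSumC s0 A z n (condU n)

/-- `Q^{(n)}(z)` (real). -/
noncomputable def QmatR (s0 : ℕ) (A : ℤ → ℤ → Matrix (Fin s0) (Fin s0) ℝ) (z : ℝ) (n : ℕ) :
    Matrix (Fin s0) (Fin s0) ℝ := pathSumR s0 A z n (condQ n)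

/-- `D^{(n)}(z)` (real). -/
noncomputable def DmatR (s0 : ℕ) (A : ℤ → ℤ → Matrix (Fin s0) (Fin s0) ℝ) (z : ℝ) (n : ℕ) :
    Matrix (Fin s0) (Fin s0) ℝ := pathSumR s0 A z n (condD n)

/-- `U^{(n)}(z)` (real). -/
noncomputable def UmatR (s0 : ℕ) (A : ℤ → ℤ → Matrix (Fin s0) (Fin s0) ℝ) (z : ℝ) (n : ℕ) :
    Matrix (Fin s0) (Fin s0) ℝ := pathSumR s0 A z n (condU n)

/-- `N1(z) = Σ_{n≥0} Q^{(n)}(z)`, entrywise (complex). -/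
noncomputable def N1C (s0 : ℕ) (A : ℤ → ℤ → Matrix (Fin s0) (Fin s0) ℝ) (z : ℂ) :
    Matrix (Fin s0) (Fin s0) ℂ := Matrix.of fun i j => ∑' n : ℕ, QmatC s0 A z n i j

/-- `G1(z) = Σ_{n≥1} D^{(n)}(z)`, entrywise (complex). -/
noncomputable def G1C (s0 : ℕ) (A : ℤ → ℤ → Matrix (Fin s0) (Fin s0) ℝ) (z : ℂ) :
    Matrix (Fin s0) (Fin s0) ℂ := Matrix.of fun i j => ∑' n : ℕ, DmatC s0 A z n i j

/-- `R1(z) = Σ_{n≥1} U^{(n)}(z)`, entrywise (complex). -/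
noncomputable def R1C (s0 : ℕ) (A : ℤ → ℤ → Matrix (Fin s0) (Fin s0) ℝ) (z : ℂ) :
    Matrix (Fin s0) (Fin s0) ℂ := Matrix.of fun i j => ∑' n : ℕ, UmatC s0 A z n i j

/-- `N1(z)` (real). -/
noncomputable def N1R (s0 : ℕ) (A : ℤ → ℤ → Matrix (Fin s0) (Fin s0) ℝ) (z : ℝ) :
    Matrix (Fin s0) (Fin s0) ℝ := Matrix.of fun i j => ∑' n : ℕ, QmatR s0 A z n i j

/-- `G1(z)` (real). -/
noncomputable def G1R (s0 : ℕ) (A : ℤ → ℤ → Matrix (Fin s0) (Fin s0) ℝ) (z : ℝ) :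
    Matrix (Fin s0) (Fin s0) ℝ := Matrix.of fun i j => ∑' n : ℕ, DmatR s0 A z n i j

/-- `R1(z)` (real). -/
noncomputable def R1R (s0 : ℕ) (A : ℤ → ℤ → Matrix (Fin s0) (Fin s0) ℝ) (z : ℝ) :
    Matrix (Fin s0) (Fin s0) ℝ := Matrix.of fun i j => ∑' n : ℕ, UmatR s0 A z n i j

/-- `C(z,w) = Σ_{i,j∈H} A_{i,j} z^i w^j` over `ℂ`. -/
noncomputable def CmatC (s0 : ℕ) (A : ℤ → ℤ → Matrix (Fin s0) (Fin s0) ℝ) (z w : ℂ) :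
    Matrix (Fin s0) (Fin s0) ℂ :=
  ∑ i ∈ Hs, ∑ j ∈ Hs, (z ^ i * w ^ j) • (A i j).map Complex.ofReal

/-- `H1(z) = A_{*,0}(z) + A_{*,1}(z) N1(z) A_{*,-1}(z)` (complex). -/
noncomputable def H1C (s0 : ℕ) (A : ℤ → ℤ → Matrix (Fin s0) (Fin s0) ℝ) (z : ℂ) :
    Matrix (Fin s0) (Fin s0) ℂ :=
  AstarC s0 A z 0 + AstarC s0 A z 1 * N1C s0 A z * AstarC s0 A z (-1)

/-- A matrix with row sums one and nonnegative entries. -/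
def IsStochastic {n : ℕ} (M : Matrix (Fin n) (Fin n) ℝ) : Prop :=
  (∀ i j, 0 ≤ M i j) ∧ ∀ i, ∑ j, M i j = 1

end QBDSeries


namespace QBDSeries

open Finset

lemma mem_Hs_iff {a : ℤ} : a ∈ Hs ↔ a = -1 ∨ a = 0 ∨ a = 1 := by
  simp [Hs]

lemma sum_Hs {M : Type*} [AddCommMonoid M] (f : ℤ → M) :
    ∑ i ∈ Hs, f i = f (-1) + (f 0 + f 1) := by
  rw [show Hs = insert (-1 : ℤ) (insert (0 : ℤ) {1}) from rfl]
  rw [Finset.sum_insert (by decide), Finset.sum_insert (by decide), Finset.sum_singleton]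

lemma psum_eq_ite {n : ℕ} (σ : Fin n → ℤ) (k : ℕ) :
    psum σ k = ∑ i : Fin n, if (i : ℕ) < k then σ i else 0 := by
  rw [psum, Finset.sum_filter]

lemma psum_zero {n : ℕ} (σ : Fin n → ℤ) : psum σ 0 = 0 := by
  simp [psum_eq_ite]

lemma psum_total {n : ℕ} (σ : Fin n → ℤ) {k : ℕ} (hk : n ≤ k) :
    psum σ k = ∑ i, σ i := by
  rw [psum_eq_ite]
  exact Finset.sum_congr rfl fun i _ => if_pos (lt_of_lt_of_le i.2 hk)

lemma psum_cons {n : ℕ} (a : ℤ) (τ : Fin n → ℤ) (k : ℕ) :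
    psum (Fin.cons a τ) (k + 1) = a + psum τ k := by
  rw [psum_eq_ite, Fin.sum_univ_succ, psum_eq_ite]
  simp only [Fin.cons_zero, Fin.cons_succ, Fin.val_zero, Fin.val_succ]
  rw [if_pos (Nat.succ_pos k)]
  congr 1
  refine Finset.sum_congr rfl fun i _ => ?_
  rcases Nat.lt_or_ge (i : ℕ) k with h | h
  · rw [if_pos (by omega), if_pos h]
  · rw [if_neg (by omega), if_neg (by omega)]

lemma psum_snoc_of_le {n : ℕ} (τ : Fin n → ℤ) (a : ℤ) {k : ℕ} (hk : k ≤ n) :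
    psum (Fin.snoc τ a) k = psum τ k := by
  rw [psum_eq_ite, Fin.sum_univ_castSucc, psum_eq_ite]
  simp only [Fin.snoc_castSucc, Fin.coe_castSucc, Fin.val_last]
  rw [if_neg (by omega), add_zero]

lemma psum_snoc_total {n : ℕ} (τ : Fin n → ℤ) (a : ℤ) :
    psum (Fin.snoc τ a) (n + 1) = psum τ n + a := by
  rw [psum_total _ (le_refl (n + 1)), psum_total τ (le_refl n), Fin.sum_univ_castSucc]
  simp

lemma psum_append_of_le {m k : ℕ} (τ₁ : Fin m → ℤ) (τ₂ : Fin k → ℤ) {j : ℕ} (hj : j ≤ m) :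
    psum (Fin.append τ₁ τ₂) j = psum τ₁ j := by
  rw [psum_eq_ite, Fin.sum_univ_add, psum_eq_ite]
  simp only [Fin.append_left, Fin.append_right, Fin.coe_castAdd, Fin.coe_natAdd]
  have h2 : ∑ i : Fin k, (if m + (i : ℕ) < j then τ₂ i else 0) = 0 :=
    Finset.sum_eq_zero fun i _ => if_neg (by omega)
  rw [h2, add_zero]

lemma psum_append_add {m k : ℕ} (τ₁ : Fin m → ℤ) (τ₂ : Fin k → ℤ) (j : ℕ) :
    psum (Fin.append τ₁ τ₂) (m + j) = psum τ₁ m + psum τ₂ j := by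
  rw [psum_eq_ite, Fin.sum_univ_add, psum_total τ₁ le_rfl, psum_eq_ite]
  simp only [Fin.append_left, Fin.append_right, Fin.coe_castAdd, Fin.coe_natAdd]
  congr 1
  · exact Finset.sum_congr rfl fun i _ => if_pos (by omega)
  · refine Finset.sum_congr rfl fun i _ => ?_
    rcases Nat.lt_or_ge (i : ℕ) j with h | h
    · rw [if_pos (by omega), if_pos h]
    · rw [if_neg (by omega), if_neg (by omega)]

/-- Auxiliary equivalence splitting a tuple into two blocks. -/
def appendEquiv (X : Type*) (m k : ℕ) : ((Fin m → X) × (Fin k → X)) ≃ (Fin (m + k) → X) where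
  toFun := fun p => Fin.append p.1 p.2
  invFun := fun σ => (fun i => σ (Fin.castAdd k i), fun j => σ (Fin.natAdd m j))
  left_inv := fun p => by
    refine Prod.ext (funext fun i => ?_) (funext fun j => ?_)
    · exact Fin.append_left _ _ _
    · exact Fin.append_right _ _ _
  right_inv := fun σ => funext fun i =>
    Fin.addCases (fun i => Fin.append_left _ _ _) (fun j => Fin.append_right _ _ _) i

@[simp] lemma appendEquiv_apply (X : Type*) (m k : ℕ) (p : (Fin m → X) × (Fin k → X)) :
    appendEquiv X m k p = Fin.append p.1 p.2 := rfl

/-- Condition defining excursions (strictly positive interior, return to 0). -/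
def condE (n : ℕ) (σ : Fin n → ℤ) : Prop :=
  (∀ k : ℕ, 1 ≤ k → k ≤ n - 1 → 1 ≤ psum σ k) ∧ psum σ n = 0

/-- First-return-at-`m` condition. -/
def FRat (m : ℕ) {n : ℕ} (σ : Fin n → ℤ) : Prop :=
  (∀ j : ℕ, 1 ≤ j → j < m → psum σ j ≠ 0) ∧ psum σ m = 0

lemma condD_snoc {n : ℕ} (τ : Fin n → ℤ) {a : ℤ} (ha : a ∈ Hs) :
    condD (n+1) (Fin.snoc τ a) ↔ (condQ n τ ∧ a = -1) := by
  have ha' : a = -1 ∨ a = 0 ∨ a = 1 := mem_Hs_iff.mp ha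
  constructor
  · rintro ⟨h1, h2⟩
    rw [psum_snoc_total] at h2
    have hτn : 0 ≤ psum τ n := by
      rcases Nat.eq_zero_or_pos n with hn | hn
      · subst hn; simp [psum_zero]
      · have h := h1 n hn (by omega)
        rwa [psum_snoc_of_le _ _ (by omega)] at h
    have key : psum τ n = 0 ∧ a = -1 := by rcases ha' with rfl | rfl | rfl <;> omega
    refine ⟨⟨fun k hk hk' => ?_, key.1⟩, key.2⟩
    have h := h1 k hk (by omega)
    rwa [psum_snoc_of_le _ _ (by omega)] at h
  · rintro ⟨⟨h1, h2⟩, rfl⟩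
    refine ⟨fun k hk hk' => ?_, by rw [psum_snoc_total]; omega⟩
    rw [psum_snoc_of_le _ _ (by omega)]
    rcases Nat.lt_or_ge k n with h | h
    · exact h1 k hk (by omega)
    · have hkn : k = n := by omega
      rw [hkn]; omega

lemma condU_cons {n : ℕ} (τ : Fin n → ℤ) {a : ℤ} (ha : a ∈ Hs) :
    condU (n+1) (Fin.cons a τ) ↔ (a = 1 ∧ condQ n τ) := by
  have ha' : a = -1 ∨ a = 0 ∨ a = 1 := mem_Hs_iff.mp ha
  have h0 : psum (Fin.cons a τ) 1 = a := by
    have := psum_cons a τ 0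
    simpa [psum_zero] using this
  constructor
  · rintro ⟨h1, h2⟩
    rw [psum_cons] at h2
    have ha1 : a = 1 := by
      rcases Nat.eq_zero_or_pos n with hn | hn
      · subst hn; rw [psum_zero] at h2; omega
      · have h := h1 1 le_rfl (by omega)
        rw [h0] at h
        rcases ha' with rfl | rfl | rfl <;> omega
    subst ha1
    refine ⟨rfl, ⟨fun k hk hk' => ?_, by omega⟩⟩
    have h := h1 (k+1) (by omega) (by omega)
    rw [psum_cons] at h
    omega
  · rintro ⟨rfl, h1, h2⟩
    constructor
    · intro k hk hk'
      obtain ⟨j, rfl⟩ : ∃ j, k = j + 1 := ⟨k - 1, by omega⟩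
      rw [psum_cons]
      rcases Nat.eq_zero_or_pos j with hj | hj
      · subst hj; rw [psum_zero]; omega
      · have := h1 j hj (by omega)
        omega
    · rw [psum_cons]; omega

lemma condE_cons {n : ℕ} (hn : 1 ≤ n) (τ : Fin n → ℤ) {a : ℤ} (ha : a ∈ Hs) :
    condE (n+1) (Fin.cons a τ) ↔ (a = 1 ∧ condD n τ) := by
  have ha' : a = -1 ∨ a = 0 ∨ a = 1 := mem_Hs_iff.mp ha
  have h0 : psum (Fin.cons a τ) 1 = a := by
    have := psum_cons a τ 0
    simpa [psum_zero] using this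
  constructor
  · rintro ⟨h1, h2⟩
    rw [psum_cons] at h2
    have ha1 : a = 1 := by
      have h := h1 1 le_rfl (by omega)
      rw [h0] at h
      rcases ha' with rfl | rfl | rfl <;> omega
    subst ha1
    refine ⟨rfl, ⟨fun k hk hk' => ?_, by omega⟩⟩
    have h := h1 (k+1) (by omega) (by omega)
    rw [psum_cons] at h
    omega
  · rintro ⟨rfl, h1, h2⟩
    refine ⟨fun k hk hk' => ?_, by rw [psum_cons]; omega⟩
    obtain ⟨j, rfl⟩ : ∃ j, k = j + 1 := ⟨k - 1, by omega⟩
    rw [psum_cons]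
    rcases Nat.eq_zero_or_pos j with hj | hj
    · subst hj; rw [psum_zero]; omega
    · have := h1 j hj (by omega)
      omega

lemma condE_one_iff (a : ℤ) (τ : Fin 0 → ℤ) : condE 1 (Fin.cons a τ) ↔ a = 0 := by
  have h0 : psum (Fin.cons a τ) 1 = a := by
    have := psum_cons a τ 0
    simpa [psum_zero] using this
  unfold condE
  rw [h0]
  constructor
  · rintro ⟨-, h⟩; exact h
  · rintro rfl; exact ⟨fun k hk hk' => by omega, rfl⟩

lemma condQ_append_iff {m k : ℕ} (hm : 1 ≤ m) (τ₁ : Fin m → ℤ) (τ₂ : Fin k → ℤ) :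
    (condQ (m+k) (Fin.append τ₁ τ₂) ∧ FRat m (Fin.append τ₁ τ₂)) ↔
      (condE m τ₁ ∧ condQ k τ₂) := by
  constructor
  · rintro ⟨⟨hQ1, hQ2⟩, hF1, hF2⟩
    rw [psum_append_of_le τ₁ τ₂ le_rfl] at hF2
    rw [psum_append_add] at hQ2
    refine ⟨⟨fun j hj hj' => ?_, hF2⟩, ⟨fun j hj hj' => ?_, by omega⟩⟩
    · have h1 := hQ1 j hj (by omega)
      rw [psum_append_of_le τ₁ τ₂ (by omega)] at h1
      have h2 := hF1 j hj (by omega)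
      rw [psum_append_of_le τ₁ τ₂ (by omega)] at h2
      omega
    · have h1 := hQ1 (m+j) (by omega) (by omega)
      rw [psum_append_add] at h1
      omega
  · rintro ⟨⟨hE1, hE2⟩, hq1, hq2⟩
    refine ⟨⟨fun j hj hj' => ?_, by rw [psum_append_add]; omega⟩,
      ⟨fun j hj hj' => ?_, by rw [psum_append_of_le τ₁ τ₂ le_rfl]; exact hE2⟩⟩
    · rcases le_or_gt j m with h | h
      · rw [psum_append_of_le τ₁ τ₂ h]
        rcases Nat.lt_or_ge j m with h' | h'
        · have := hE1 j hj (by omega); omega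
        · have hjm : j = m := by omega
          rw [hjm, hE2]
      · obtain ⟨i, rfl⟩ : ∃ i, j = m + i := ⟨j - m, by omega⟩
        rw [psum_append_add]
        rcases Nat.eq_zero_or_pos i with hi | hi
        · subst hi; rw [psum_zero]; omega
        · have := hq1 i hi (by omega); omega
    · rw [psum_append_of_le τ₁ τ₂ (by omega)]
      intro hc
      have := hE1 j hj (by omega)
      omega

section PathLemmas

variable {s0 : ℕ} (A : ℤ → ℤ → Matrix (Fin s0) (Fin s0) ℝ) (z : ℂ)

lemma pathSumC_congr {n : ℕ} {cond cond' : (Fin n → ℤ) → Prop}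
    (h : ∀ σ : Fin n → ℤ, (∀ i, σ i ∈ Hs) → (cond σ ↔ cond' σ)) :
    pathSumC s0 A z n cond = pathSumC s0 A z n cond' := by
  classical
  unfold pathSumC
  exact Finset.sum_congr rfl fun σ _ => if_congr (h _ fun i => (σ i).2) rfl rfl

lemma pathSumC_false {n : ℕ} {cond : (Fin n → ℤ) → Prop}
    (h : ∀ σ : Fin n → ℤ, (∀ i, σ i ∈ Hs) → ¬ cond σ) :
    pathSumC s0 A z n cond = 0 := by
  classical
  unfold pathSumC
  exact Finset.sum_eq_zero fun σ _ => if_neg (h _ fun i => (σ i).2)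

open Classical in
lemma pathSumC_and_left {n : ℕ} (c : Prop) (cond : (Fin n → ℤ) → Prop) :
    pathSumC s0 A z n (fun σ => c ∧ cond σ) =
      if c then pathSumC s0 A z n cond else 0 := by
  by_cases h : c
  · rw [if_pos h]; exact pathSumC_congr A z fun σ _ => by simp [h]
  · rw [if_neg h]; exact pathSumC_false A z fun σ _ => by simp [h]

open Classical in
lemma pathSumC_and_right {n : ℕ} (c : Prop) (cond : (Fin n → ℤ) → Prop) :
    pathSumC s0 A z n (fun σ => cond σ ∧ c) =
      if c then pathSumC s0 A z n cond else 0 := by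
  rw [pathSumC_congr A z (cond' := fun σ => c ∧ cond σ) (fun σ _ => and_comm),
    pathSumC_and_left]

open Classical in
lemma pathSumC_nil (cond : (Fin 0 → ℤ) → Prop) :
    pathSumC s0 A z 0 cond = if cond ![] then 1 else 0 := by
  classical
  unfold pathSumC
  rw [Fintype.sum_unique,
    Subsingleton.elim (fun k : Fin 0 => ((default : Fin 0 → {x : ℤ // x ∈ Hs}) k : ℤ)) ![]]
  simp

lemma pathSumC_cons (n : ℕ) (cond : (Fin (n+1) → ℤ) → Prop) :
    pathSumC s0 A z (n+1) cond =
      ∑ a ∈ Hs, AstarC s0 A z a * pathSumC s0 A z n (fun τ => cond (Fin.cons a τ)) := by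
  classical
  have lhs_eq : pathSumC s0 A z (n+1) cond
      = ∑ a : {x : ℤ // x ∈ Hs}, ∑ τ : Fin n → {x : ℤ // x ∈ Hs},
          (if cond (fun k => ((Fin.cons a τ : ∀ _ : Fin (n+1), {x : ℤ // x ∈ Hs}) k : ℤ))
            then (List.ofFn fun k : Fin (n+1) =>
              AstarC s0 A z ((Fin.cons a τ : ∀ _ : Fin (n+1), {x : ℤ // x ∈ Hs}) k : ℤ)).prod
            else 0) := by
    unfold pathSumC
    rw [← Equiv.sum_comp (Fin.consEquiv fun _ : Fin (n+1) => {x : ℤ // x ∈ Hs}),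
      Fintype.sum_prod_type]
    exact Finset.sum_congr rfl fun a _ => Finset.sum_congr rfl fun τ _ => rfl
  rw [lhs_eq, ← Finset.sum_coe_sort Hs
    (fun x : ℤ => AstarC s0 A z x * pathSumC s0 A z n (fun τ => cond (Fin.cons x τ)))]
  refine Finset.sum_congr rfl fun a _ => ?_
  unfold pathSumC
  rw [Finset.mul_sum]
  refine Finset.sum_congr rfl fun τ _ => ?_
  have hcoe : (fun k => ((Fin.cons a τ : ∀ _ : Fin (n+1), {x : ℤ // x ∈ Hs}) k : ℤ))
      = Fin.cons (a : ℤ) (fun k => (τ k : ℤ)) := by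
    funext k
    induction k using Fin.cases <;> simp
  have hprod : (List.ofFn fun k : Fin (n+1) =>
        AstarC s0 A z ((Fin.cons a τ : ∀ _ : Fin (n+1), {x : ℤ // x ∈ Hs}) k : ℤ))
      = AstarC s0 A z (a : ℤ) :: (List.ofFn fun k : Fin n => AstarC s0 A z (τ k : ℤ)) := by
    rw [List.ofFn_succ]
    simp
  rw [hcoe, hprod, List.prod_cons, mul_ite, mul_zero]

lemma pathSumC_snoc (n : ℕ) (cond : (Fin (n+1) → ℤ) → Prop) :
    pathSumC s0 A z (n+1) cond =
      ∑ a ∈ Hs, pathSumC s0 A z n (fun τ => cond (Fin.snoc τ a)) * AstarC s0 A z a := by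
  classical
  have lhs_eq : pathSumC s0 A z (n+1) cond
      = ∑ a : {x : ℤ // x ∈ Hs}, ∑ τ : Fin n → {x : ℤ // x ∈ Hs},
          (if cond (fun k => ((Fin.snoc τ a : ∀ _ : Fin (n+1), {x : ℤ // x ∈ Hs}) k : ℤ))
            then (List.ofFn fun k : Fin (n+1) =>
              AstarC s0 A z ((Fin.snoc τ a : ∀ _ : Fin (n+1), {x : ℤ // x ∈ Hs}) k : ℤ)).prod
            else 0) := by
    unfold pathSumC
    rw [← Equiv.sum_comp (Fin.snocEquiv fun _ : Fin (n+1) => {x : ℤ // x ∈ Hs}),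
      Fintype.sum_prod_type]
    exact Finset.sum_congr rfl fun a _ => Finset.sum_congr rfl fun τ _ => rfl
  rw [lhs_eq, ← Finset.sum_coe_sort Hs
    (fun x : ℤ => pathSumC s0 A z n (fun τ => cond (Fin.snoc τ x)) * AstarC s0 A z x)]
  refine Finset.sum_congr rfl fun a _ => ?_
  unfold pathSumC
  rw [Finset.sum_mul]
  refine Finset.sum_congr rfl fun τ _ => ?_
  have hcoe : (fun k => ((Fin.snoc τ a : ∀ _ : Fin (n+1), {x : ℤ // x ∈ Hs}) k : ℤ))
      = Fin.snoc (fun k => (τ k : ℤ)) (a : ℤ) := by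
    funext k
    induction k using Fin.lastCases <;> simp
  have hprod : (List.ofFn fun k : Fin (n+1) =>
        AstarC s0 A z ((Fin.snoc τ a : ∀ _ : Fin (n+1), {x : ℤ // x ∈ Hs}) k : ℤ))
      = (List.ofFn fun k : Fin n => AstarC s0 A z (τ k : ℤ)).concat (AstarC s0 A z (a : ℤ)) := by
    rw [List.ofFn_succ']
    simp
  rw [hcoe, hprod, List.prod_concat, ite_mul, zero_mul]

lemma pathSumC_append (m k : ℕ) (cond1 : (Fin m → ℤ) → Prop) (cond2 : (Fin k → ℤ) → Prop) :
    pathSumC s0 A z (m + k)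
        (fun σ => cond1 (fun i => σ (Fin.castAdd k i)) ∧ cond2 (fun j => σ (Fin.natAdd m j))) =
      pathSumC s0 A z m cond1 * pathSumC s0 A z k cond2 := by
  classical
  have lhs_eq : pathSumC s0 A z (m + k)
        (fun σ => cond1 (fun i => σ (Fin.castAdd k i)) ∧ cond2 (fun j => σ (Fin.natAdd m j)))
      = ∑ τ₁ : Fin m → {x : ℤ // x ∈ Hs}, ∑ τ₂ : Fin k → {x : ℤ // x ∈ Hs},
          (if (cond1 (fun i => (τ₁ i : ℤ)) ∧ cond2 (fun j => (τ₂ j : ℤ)))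
            then (List.ofFn fun i : Fin (m + k) =>
              AstarC s0 A z ((Fin.append τ₁ τ₂ i : {x : ℤ // x ∈ Hs}) : ℤ)).prod
            else 0) := by
    unfold pathSumC
    rw [← Equiv.sum_comp (appendEquiv {x : ℤ // x ∈ Hs} m k), Fintype.sum_prod_type]
    refine Finset.sum_congr rfl fun τ₁ _ => Finset.sum_congr rfl fun τ₂ _ => ?_
    simp only [appendEquiv_apply, Fin.append_left, Fin.append_right]
  rw [lhs_eq]
  unfold pathSumC
  rw [Finset.sum_mul_sum]
  refine Finset.sum_congr rfl fun τ₁ _ => Finset.sum_congr rfl fun τ₂ _ => ?_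
  have hprod : (List.ofFn fun i : Fin (m + k) =>
        AstarC s0 A z ((Fin.append τ₁ τ₂ i : {x : ℤ // x ∈ Hs}) : ℤ))
      = (List.ofFn fun i : Fin m => AstarC s0 A z (τ₁ i : ℤ))
        ++ (List.ofFn fun j : Fin k => AstarC s0 A z (τ₂ j : ℤ)) := by
    rw [List.ofFn_add]
    simp only [Fin.append_left, Fin.append_right]
    exact congrArg (· ++ _) (congrArg List.ofFn (funext fun i =>
      congrArg (fun x : {x : ℤ // x ∈ Hs} => AstarC s0 A z (x : ℤ)) (Fin.append_left τ₁ τ₂ i)))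
  rw [hprod, List.prod_append]
  by_cases h1 : cond1 (fun i => (τ₁ i : ℤ)) <;> by_cases h2 : cond2 (fun j => (τ₂ j : ℤ)) <;>
    simp [h1, h2]

lemma QmatC_zero : QmatC s0 A z 0 = 1 := by
  unfold QmatC
  rw [pathSumC_nil, if_pos]
  exact ⟨fun k hk hk' => by omega, psum_zero _⟩

lemma DmatC_zero : DmatC s0 A z 0 = 0 := by
  unfold DmatC
  rw [pathSumC_nil, if_neg]
  rintro ⟨-, h⟩
  rw [psum_zero] at h
  omega

lemma UmatC_zero : UmatC s0 A z 0 = 0 := by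
  unfold UmatC
  rw [pathSumC_nil, if_neg]
  rintro ⟨-, h⟩
  rw [psum_zero] at h
  omega

lemma DmatC_succ (n : ℕ) :
    DmatC s0 A z (n+1) = QmatC s0 A z n * AstarC s0 A z (-1) := by
  unfold DmatC QmatC
  rw [pathSumC_snoc]
  have key : ∀ a ∈ Hs, pathSumC s0 A z n (fun τ => condD (n+1) (Fin.snoc τ a))
      = if a = -1 then pathSumC s0 A z n (condQ n) else 0 := fun a ha => by
    rw [pathSumC_congr A z (cond' := fun τ => condQ n τ ∧ a = -1) (fun τ _ => condD_snoc τ ha),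
      pathSumC_and_right]
    split_ifs <;> rfl
  rw [Finset.sum_congr rfl fun a ha => by rw [key a ha]]
  rw [sum_Hs (f := fun a : ℤ =>
    (if a = -1 then pathSumC s0 A z n (condQ n) else 0) * AstarC s0 A z a)]
  norm_num

lemma UmatC_succ (n : ℕ) :
    UmatC s0 A z (n+1) = AstarC s0 A z 1 * QmatC s0 A z n := by
  unfold UmatC QmatC
  rw [pathSumC_cons]
  have key : ∀ a ∈ Hs, pathSumC s0 A z n (fun τ => condU (n+1) (Fin.cons a τ))
      = if a = 1 then pathSumC s0 A z n (condQ n) else 0 := fun a ha => by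
    rw [pathSumC_congr A z (cond' := fun τ => a = 1 ∧ condQ n τ) (fun τ _ => condU_cons τ ha),
      pathSumC_and_left]
    split_ifs <;> rfl
  rw [Finset.sum_congr rfl fun a ha => by rw [key a ha]]
  rw [sum_Hs (f := fun a : ℤ =>
    AstarC s0 A z a * (if a = 1 then pathSumC s0 A z n (condQ n) else 0))]
  norm_num

/-- Excursion sums: `E^{(0)} = 0` by convention. -/
noncomputable def EmatC (s0 : ℕ) (A : ℤ → ℤ → Matrix (Fin s0) (Fin s0) ℝ) (z : ℂ) :
    ℕ → Matrix (Fin s0) (Fin s0) ℂ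
  | 0 => 0
  | (m+1) => pathSumC s0 A z (m+1) (condE (m+1))

lemma EmatC_one : EmatC s0 A z 1 = AstarC s0 A z 0 := by
  show pathSumC s0 A z (0+1) (condE (0+1)) = AstarC s0 A z 0
  rw [pathSumC_cons]
  have key : ∀ a ∈ Hs, pathSumC s0 A z 0 (fun τ => condE (0+1) (Fin.cons a τ))
      = if a = 0 then (1 : Matrix (Fin s0) (Fin s0) ℂ) else 0 := fun a ha => by
    rw [pathSumC_congr A z (cond' := fun _ : Fin 0 → ℤ => a = 0)
      (fun τ _ => condE_one_iff a τ), pathSumC_nil]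
    split_ifs <;> rfl
  rw [Finset.sum_congr rfl fun a ha => by rw [key a ha]]
  rw [sum_Hs (f := fun a : ℤ =>
    AstarC s0 A z a * (if a = 0 then (1 : Matrix (Fin s0) (Fin s0) ℂ) else 0))]
  norm_num

lemma EmatC_two (m : ℕ) :
    EmatC s0 A z (m+2) = AstarC s0 A z 1 * (QmatC s0 A z m * AstarC s0 A z (-1)) := by
  show pathSumC s0 A z (m+1+1) (condE (m+1+1)) = _
  rw [pathSumC_cons]
  have key : ∀ a ∈ Hs, pathSumC s0 A z (m+1) (fun τ => condE (m+1+1) (Fin.cons a τ))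
      = if a = 1 then pathSumC s0 A z (m+1) (condD (m+1)) else 0 := fun a ha => by
    rw [pathSumC_congr A z (cond' := fun τ => a = 1 ∧ condD (m+1) τ)
        (fun τ _ => condE_cons (by omega) τ ha), pathSumC_and_left]
    split_ifs <;> rfl
  rw [Finset.sum_congr rfl fun a ha => by rw [key a ha]]
  rw [sum_Hs (f := fun a : ℤ =>
    AstarC s0 A z a * (if a = 1 then pathSumC s0 A z (m+1) (condD (m+1)) else 0))]
  have hD : pathSumC s0 A z (m+1) (condD (m+1)) = QmatC s0 A z m * AstarC s0 A z (-1) :=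
    DmatC_succ A z m
  norm_num [hD]

lemma split_firstReturn (n m k : ℕ) (hm : 1 ≤ m) (h : n = m + k) :
    pathSumC s0 A z n (fun σ => condQ n σ ∧ FRat m σ) =
      pathSumC s0 A z m (condE m) * pathSumC s0 A z k (condQ k) := by
  subst h
  rw [← pathSumC_append]
  refine pathSumC_congr A z fun σ _ => ?_
  have hback : Fin.append (fun i => σ (Fin.castAdd k i)) (fun j => σ (Fin.natAdd m j)) = σ :=
    funext fun i =>
      Fin.addCases (fun i => Fin.append_left _ _ _) (fun j => Fin.append_right _ _ _) i
  conv_lhs => rw [← hback]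
  exact condQ_append_iff hm _ _

open Classical in
lemma Qmat_partition (n : ℕ) (hn : 1 ≤ n) :
    QmatC s0 A z n = ∑ p ∈ Finset.HasAntidiagonal.antidiagonal n,
      (if 1 ≤ p.1 then pathSumC s0 A z n (fun σ => condQ n σ ∧ FRat p.1 σ) else 0) := by
  classical
  have step : ∀ p : ℕ × ℕ,
      (if 1 ≤ p.1 then pathSumC s0 A z n (fun σ => condQ n σ ∧ FRat p.1 σ) else 0)
      = ∑ σ : Fin n → {x : ℤ // x ∈ Hs},
          (if 1 ≤ p.1 ∧ condQ n (fun k => (σ k : ℤ)) ∧ FRat p.1 (fun k => (σ k : ℤ))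
            then (List.ofFn fun k : Fin n => AstarC s0 A z (σ k : ℤ)).prod else 0) := by
    intro p
    by_cases h : 1 ≤ p.1
    · rw [if_pos h]
      unfold pathSumC
      refine Finset.sum_congr rfl fun σ _ => ?_
      by_cases hc : condQ n (fun k => (σ k : ℤ)) ∧ FRat p.1 (fun k => (σ k : ℤ))
      · rw [if_pos hc, if_pos ⟨h, hc.1, hc.2⟩]
      · rw [if_neg hc, if_neg (by tauto)]
    · rw [if_neg h]
      exact (Finset.sum_eq_zero fun σ _ => if_neg (by tauto)).symm
  calc QmatC s0 A z n
      = ∑ σ : Fin n → {x : ℤ // x ∈ Hs},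
          ∑ p ∈ Finset.HasAntidiagonal.antidiagonal n,
          (if 1 ≤ p.1 ∧ condQ n (fun k => (σ k : ℤ)) ∧ FRat p.1 (fun k => (σ k : ℤ))
            then (List.ofFn fun k : Fin n => AstarC s0 A z (σ k : ℤ)).prod else 0) := ?_
    _ = ∑ p ∈ Finset.HasAntidiagonal.antidiagonal n,
        (if 1 ≤ p.1 then pathSumC s0 A z n (fun σ => condQ n σ ∧ FRat p.1 σ) else 0) := by
        rw [Finset.sum_comm]
        exact Finset.sum_congr rfl fun p _ => (step p).symm
  unfold QmatC pathSumC
  refine Finset.sum_congr rfl fun σ _ => ?_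
  by_cases hσ : condQ n (fun k => (σ k : ℤ))
  · rw [if_pos hσ]
    have hex : ∃ m, 1 ≤ m ∧ psum (fun k => (σ k : ℤ)) m = 0 := ⟨n, hn, hσ.2⟩
    have hm1 : 1 ≤ Nat.find hex := (Nat.find_spec hex).1
    have hm0 : psum (fun k => (σ k : ℤ)) (Nat.find hex) = 0 := (Nat.find_spec hex).2
    have hmn : Nat.find hex ≤ n := Nat.find_le ⟨hn, hσ.2⟩
    rw [Finset.sum_eq_single_of_mem (Nat.find hex, n - Nat.find hex)
      (Finset.HasAntidiagonal.mem_antidiagonal.mpr (by omega))]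
    · rw [if_pos ⟨hm1, hσ, fun j hj1 hj2 hc => Nat.find_min hex hj2 ⟨hj1, hc⟩, hm0⟩]
    · rintro ⟨p1, p2⟩ hp hne
      refine if_neg ?_
      rintro ⟨h1, -, hF1, hF2⟩
      apply hne
      have hp' := Finset.HasAntidiagonal.mem_antidiagonal.mp hp
      have e1 : p1 = Nat.find hex := by
        have h2 : Nat.find hex ≤ p1 := Nat.find_le ⟨h1, hF2⟩
        rcases Nat.lt_or_ge (Nat.find hex) p1 with h3 | h3
        · exact absurd hm0 (hF1 _ hm1 h3)
        · omega
      have e2 : p2 = n - Nat.find hex := by omega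
      rw [e1, e2]
  · rw [if_neg hσ]
    exact (Finset.sum_eq_zero fun p _ => if_neg (by tauto)).symm

lemma QmatC_rec (n : ℕ) :
    QmatC s0 A z (n+1) =
      ∑ p ∈ Finset.HasAntidiagonal.antidiagonal (n+1), EmatC s0 A z p.1 * QmatC s0 A z p.2 := by
  classical
  rw [Qmat_partition A z (n+1) (by omega)]
  refine Finset.sum_congr rfl fun p hp => ?_
  have hp' := Finset.HasAntidiagonal.mem_antidiagonal.mp hp
  by_cases h1 : 1 ≤ p.1
  · rw [if_pos h1, split_firstReturn A z (n+1) p.1 p.2 h1 hp'.symm]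
    congr 1
    · obtain ⟨m, hm⟩ : ∃ m, p.1 = m + 1 := ⟨p.1 - 1, by omega⟩
      rw [hm]
      rfl
  · rw [if_neg h1]
    have h0 : p.1 = 0 := by omega
    rw [h0, show EmatC s0 A z 0 = (0 : Matrix (Fin s0) (Fin s0) ℂ) from rfl, zero_mul]

end PathLemmas

section Analysis

variable {s0 : ℕ}

lemma abs_one_entry (a b : Fin s0) :
    ‖(1 : Matrix (Fin s0) (Fin s0) ℂ) a b‖
      = (1 : Matrix (Fin s0) (Fin s0) ℝ) a b := by
  by_cases h : a = b <;> simp [Matrix.one_apply, h]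

lemma abs_mul_entry_le {M N : Matrix (Fin s0) (Fin s0) ℂ} {P Q : Matrix (Fin s0) (Fin s0) ℝ}
    (h1 : ∀ a b, ‖M a b‖ ≤ P a b) (h2 : ∀ a b, ‖N a b‖ ≤ Q a b)
    (a b : Fin s0) : ‖(M * N) a b‖ ≤ (P * Q) a b := by
  rw [Matrix.mul_apply, Matrix.mul_apply]
  refine (norm_sum_le _ _).trans (Finset.sum_le_sum fun c _ => ?_)
  rw [norm_mul]
  exact mul_le_mul (h1 a c) (h2 c b) (norm_nonneg _)
    ((norm_nonneg _).trans (h1 a c))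

lemma abs_listprod_entry_le :
    ∀ (n : ℕ) (f : Fin n → Matrix (Fin s0) (Fin s0) ℂ) (g : Fin n → Matrix (Fin s0) (Fin s0) ℝ),
      (∀ k, ∀ a b, ‖f k a b‖ ≤ g k a b) →
      ∀ a b, ‖(List.ofFn f).prod a b‖ ≤ (List.ofFn g).prod a b
  | 0, f, g, h, a, b => by
      simp only [List.ofFn_zero, List.prod_nil]
      exact (abs_one_entry a b).le
  | (n+1), f, g, h, a, b => by
      rw [List.ofFn_succ, List.ofFn_succ, List.prod_cons, List.prod_cons]
      exact abs_mul_entry_le (h 0)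
        (abs_listprod_entry_le n (fun i => f i.succ) (fun i => g i.succ) (fun k => h k.succ)) a b

lemma abs_AstarC_le (A : ℤ → ℤ → Matrix (Fin s0) (Fin s0) ℝ)
    (hAnn : ∀ i j : ℤ, ∀ k l, 0 ≤ A i j k l) (z : ℂ) (i : ℤ) (a b : Fin s0) :
    ‖AstarC s0 A z i a b‖ ≤ AstarR s0 A (‖z‖) i a b := by
  unfold AstarC AstarR
  rw [Matrix.sum_apply, Matrix.sum_apply]
  refine (norm_sum_le _ _).trans (Finset.sum_le_sum fun j _ => ?_)
  rw [Matrix.smul_apply, Matrix.smul_apply, Matrix.map_apply, smul_eq_mul, smul_eq_mul, norm_mul,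
    norm_zpow, Complex.norm_real, Real.norm_of_nonneg (hAnn j i a b)]

lemma abs_pathSumC_le (A : ℤ → ℤ → Matrix (Fin s0) (Fin s0) ℝ)
    (hAnn : ∀ i j : ℤ, ∀ k l, 0 ≤ A i j k l) (z : ℂ) (n : ℕ)
    (cond : (Fin n → ℤ) → Prop) (a b : Fin s0) :
    ‖pathSumC s0 A z n cond a b‖
      ≤ pathSumR s0 A (‖z‖) n cond a b := by
  classical
  unfold pathSumC pathSumR
  rw [Matrix.sum_apply, Matrix.sum_apply]
  refine (norm_sum_le _ _).trans (Finset.sum_le_sum fun σ _ => ?_)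
  by_cases h : cond (fun k => (σ k : ℤ))
  · rw [if_pos h, if_pos h]
    exact abs_listprod_entry_le n _ _ (fun k => abs_AstarC_le A hAnn z (σ k : ℤ)) a b
  · rw [if_neg h, if_neg h]
    simp

end Analysis

section TsumLemmas

variable {K : Type*} [NormedField K] {s0 : ℕ}

lemma summable_matrix_mul_left (M : Matrix (Fin s0) (Fin s0) K)
    (f : ℕ → Matrix (Fin s0) (Fin s0) K) (hf : ∀ a b, Summable fun n => f n a b) (a b : Fin s0) :
    Summable fun n => (M * f n) a b := by
  simp only [Matrix.mul_apply]
  exact summable_sum fun c _ => (hf c b).mul_left _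

lemma summable_matrix_mul_right (P : Matrix (Fin s0) (Fin s0) K)
    (f : ℕ → Matrix (Fin s0) (Fin s0) K) (hf : ∀ a b, Summable fun n => f n a b) (a b : Fin s0) :
    Summable fun n => (f n * P) a b := by
  simp only [Matrix.mul_apply]
  exact summable_sum fun c _ => (hf a c).mul_right _

lemma tsum_matrix_mul_left (M : Matrix (Fin s0) (Fin s0) K)
    (f : ℕ → Matrix (Fin s0) (Fin s0) K) (hf : ∀ a b, Summable fun n => f n a b) (a b : Fin s0) :
    ∑' n, (M * f n) a b = (M * Matrix.of fun c d => ∑' n, f n c d) a b := by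
  simp only [Matrix.mul_apply, Matrix.of_apply]
  rw [Summable.tsum_finsetSum fun c _ => (hf c b).mul_left _]
  exact Finset.sum_congr rfl fun c _ => tsum_mul_left

lemma tsum_matrix_mul_right (P : Matrix (Fin s0) (Fin s0) K)
    (f : ℕ → Matrix (Fin s0) (Fin s0) K) (hf : ∀ a b, Summable fun n => f n a b) (a b : Fin s0) :
    ∑' n, (f n * P) a b = ((Matrix.of fun c d => ∑' n, f n c d) * P) a b := by
  simp only [Matrix.mul_apply, Matrix.of_apply]
  rw [Summable.tsum_finsetSum fun c _ => (hf a c).mul_right _]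
  exact Finset.sum_congr rfl fun c _ => tsum_mul_right

end TsumLemmas

end QBDSeries

set_option maxHeartbeats 2000000 in
open QBDSeries in
/-- the Wiener–Hopf factorization
`I − C(z,w) = (w⁻¹ I − R1(z)) (I − H1(z)) (w I − G1(z))` for every nonzero `w`. -/
theorem statement10
    (s0 : ℕ) (hs0 : 1 ≤ s0)
    (A : ℤ → ℤ → Matrix (Fin s0) (Fin s0) ℝ)
    (hAsupp : ∀ i j : ℤ, ¬(i ∈ Hs ∧ j ∈ Hs) → A i j = 0)
    (hAnn : ∀ i j : ℤ, ∀ k l, 0 ≤ A i j k l)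
    (hAst : IsStochastic (∑ i ∈ Hs, ∑ j ∈ Hs, A i j))
    (z : ℂ) (hz : z ≠ 0)
    (hN : ∀ i j, Summable fun n : ℕ => QmatR s0 A (‖z‖) n i j)
    (hG : ∀ i j, Summable fun n : ℕ => DmatR s0 A (‖z‖) n i j)
    (hR : ∀ i j, Summable fun n : ℕ => UmatR s0 A (‖z‖) n i j) :
    ∀ w : ℂ, w ≠ 0 →
      (1 : Matrix (Fin s0) (Fin s0) ℂ) - CmatC s0 A z w =
        (w⁻¹ • (1 : Matrix (Fin s0) (Fin s0) ℂ) - R1C s0 A z) * (1 - H1C s0 A z) *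
          (w • (1 : Matrix (Fin s0) (Fin s0) ℂ) - G1C s0 A z) := by
  classical
  -- entrywise comparison bounds
  have habsQ : ∀ (n : ℕ) (a b : Fin s0),
      ‖QmatC s0 A z n a b‖ ≤ QmatR s0 A (‖z‖) n a b :=
    fun n a b => abs_pathSumC_le A hAnn z n (condQ n) a b
  have habsD : ∀ (n : ℕ) (a b : Fin s0),
      ‖DmatC s0 A z n a b‖ ≤ DmatR s0 A (‖z‖) n a b :=
    fun n a b => abs_pathSumC_le A hAnn z n (condD n) a b
  have habsU : ∀ (n : ℕ) (a b : Fin s0),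
      ‖UmatC s0 A z n a b‖ ≤ UmatR s0 A (‖z‖) n a b :=
    fun n a b => abs_pathSumC_le A hAnn z n (condU n) a b
  -- summability of the complex series, entrywise
  have hQs : ∀ a b, Summable fun n => QmatC s0 A z n a b := fun a b =>
    Summable.of_norm_bounded (hN a b) fun n => by
      exact habsQ n a b
  have hDs : ∀ a b, Summable fun n => DmatC s0 A z n a b := fun a b =>
    Summable.of_norm_bounded (hG a b) fun n => by
      exact habsD n a b
  have hUs : ∀ a b, Summable fun n => UmatC s0 A z n a b := fun a b =>
    Summable.of_norm_bounded (hR a b) fun n => by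
      exact habsU n a b
  have hQnorm : ∀ a b, Summable fun n => ‖QmatC s0 A z n a b‖ := fun a b =>
    Summable.of_nonneg_of_le (fun n => norm_nonneg _)
      (fun n => by exact habsQ n a b) (hN a b)
  -- the excursion series
  have hE2 : ∀ m, EmatC s0 A z (m+2)
      = AstarC s0 A z 1 * (QmatC s0 A z m * AstarC s0 A z (-1)) := EmatC_two A z
  have hqpR : ∀ a b, Summable fun m =>
      (QmatR s0 A (‖z‖) m * AstarR s0 A (‖z‖) (-1)) a b :=
    fun a b => summable_matrix_mul_right _ _ hN a b
  have hEboundS : ∀ a b, Summable fun m =>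
      (AstarR s0 A (‖z‖) 1 *
        (QmatR s0 A (‖z‖) m * AstarR s0 A (‖z‖) (-1))) a b :=
    fun a b => summable_matrix_mul_left _ _ hqpR a b
  have hEnorm : ∀ a b, Summable fun m => ‖EmatC s0 A z m a b‖ := by
    intro a b
    have h2 : Summable fun m => ‖EmatC s0 A z (m+2) a b‖ :=
      Summable.of_nonneg_of_le (fun _ => norm_nonneg _)
        (fun m => by
          rw [hE2 m]
          exact abs_mul_entry_le (abs_AstarC_le A hAnn z 1)
            (abs_mul_entry_le (habsQ m) (abs_AstarC_le A hAnn z (-1))) a b)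
        (hEboundS a b)
    exact (summable_nat_add_iff 2).mp h2
  have hEs : ∀ a b, Summable fun m => EmatC s0 A z m a b := fun a b => (hEnorm a b).of_norm
  -- the three series identities
  have hG1 : G1C s0 A z = N1C s0 A z * AstarC s0 A z (-1) := by
    ext a b
    show (∑' n, DmatC s0 A z n a b) = _
    rw [Summable.tsum_eq_zero_add (hDs a b)]
    have h0 : DmatC s0 A z 0 a b = 0 := by simp [DmatC_zero A z]
    have hcongr : (fun n => DmatC s0 A z (n+1) a b)
        = fun n => (QmatC s0 A z n * AstarC s0 A z (-1)) a b := by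
      funext n; rw [DmatC_succ A z n]
    rw [h0, zero_add, hcongr, tsum_matrix_mul_right _ _ hQs a b]
    rfl
  have hR1 : R1C s0 A z = AstarC s0 A z 1 * N1C s0 A z := by
    ext a b
    show (∑' n, UmatC s0 A z n a b) = _
    rw [Summable.tsum_eq_zero_add (hUs a b)]
    have h0 : UmatC s0 A z 0 a b = 0 := by simp [UmatC_zero A z]
    have hcongr : (fun n => UmatC s0 A z (n+1) a b)
        = fun n => (AstarC s0 A z 1 * QmatC s0 A z n) a b := by
      funext n; rw [UmatC_succ A z n]
    rw [h0, zero_add, hcongr, tsum_matrix_mul_left _ _ hQs a b]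
    rfl
  have hH : ∀ a b, H1C s0 A z a b = ∑' m, EmatC s0 A z m a b := by
    intro a b
    have hshift1 : Summable fun m => EmatC s0 A z (m+1) a b :=
      (summable_nat_add_iff 1).mpr (hEs a b)
    rw [Summable.tsum_eq_zero_add (hEs a b), Summable.tsum_eq_zero_add hshift1]
    have h0 : EmatC s0 A z 0 a b = 0 := rfl
    have h1 : EmatC s0 A z (0+1) a b = AstarC s0 A z 0 a b := by
      rw [show (0:ℕ)+1 = 1 from rfl, EmatC_one A z]
    have hcongr : (fun m => EmatC s0 A z (m+1+1) a b)
        = fun m => (AstarC s0 A z 1 * (QmatC s0 A z m * AstarC s0 A z (-1))) a b := by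
      funext m
      rw [show ∀ m : ℕ, m+1+1 = m+2 from fun m => rfl, hE2 m]
    rw [h0, zero_add, h1, hcongr]
    rw [tsum_matrix_mul_left (AstarC s0 A z 1) (fun m => QmatC s0 A z m * AstarC s0 A z (-1))
      (fun c d => summable_matrix_mul_right _ _ hQs c d) a b]
    have inner : (Matrix.of fun c d => ∑' m, (QmatC s0 A z m * AstarC s0 A z (-1)) c d)
        = N1C s0 A z * AstarC s0 A z (-1) := by
      ext c d
      exact tsum_matrix_mul_right _ _ hQs c d
    rw [inner]
    show (AstarC s0 A z 0 + AstarC s0 A z 1 * N1C s0 A z * AstarC s0 A z (-1)) a b = _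
    rw [Matrix.mul_assoc, Matrix.add_apply]
  -- the Cauchy product
  have hS0 : (∑ p ∈ Finset.HasAntidiagonal.antidiagonal 0, EmatC s0 A z p.1 * QmatC s0 A z p.2)
      = (0 : Matrix (Fin s0) (Fin s0) ℂ) := by
    rw [Finset.Nat.antidiagonal_zero, Finset.sum_singleton,
      show EmatC s0 A z 0 = (0 : Matrix (Fin s0) (Fin s0) ℂ) from rfl, zero_mul]
  have hSn : ∀ n, (∑ p ∈ Finset.HasAntidiagonal.antidiagonal (n+1), EmatC s0 A z p.1 * QmatC s0 A z p.2)
      = QmatC s0 A z (n+1) := fun n => (QmatC_rec A z n).symm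
  have cauchy : ∀ a b, (H1C s0 A z * N1C s0 A z) a b
      = ∑' n, (∑ p ∈ Finset.HasAntidiagonal.antidiagonal n, EmatC s0 A z p.1 * QmatC s0 A z p.2) a b := by
    intro a b
    rw [Matrix.mul_apply]
    have hterm : ∀ c, H1C s0 A z a c * N1C s0 A z c b
        = ∑' n, ∑ p ∈ Finset.HasAntidiagonal.antidiagonal n, EmatC s0 A z p.1 a c * QmatC s0 A z p.2 c b := by
      intro c
      rw [hH a c, show N1C s0 A z c b = ∑' n, QmatC s0 A z n c b from rfl]
      exact tsum_mul_tsum_eq_tsum_sum_antidiagonal_of_summable_norm (hEnorm a c) (hQnorm c b)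
    rw [Finset.sum_congr rfl fun c _ => hterm c]
    rw [← Summable.tsum_finsetSum fun c _ =>
      (summable_norm_sum_mul_antidiagonal_of_summable_norm (hEnorm a c) (hQnorm c b)).of_norm]
    refine tsum_congr fun n => ?_
    rw [Matrix.sum_apply]
    simp only [Matrix.mul_apply]
    rw [Finset.sum_comm]
  have key : (1 - H1C s0 A z) * N1C s0 A z = 1 := by
    have hHN : ∀ a b, (H1C s0 A z * N1C s0 A z) a b
        = N1C s0 A z a b - (1 : Matrix (Fin s0) (Fin s0) ℂ) a b := by
      intro a b
      rw [cauchy a b]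
      have hfs : Summable (fun n =>
          (∑ p ∈ Finset.HasAntidiagonal.antidiagonal n, EmatC s0 A z p.1 * QmatC s0 A z p.2) a b) := by
        apply (summable_nat_add_iff 1).mp
        rw [show (fun n => (∑ p ∈ Finset.HasAntidiagonal.antidiagonal (n+1),
            EmatC s0 A z p.1 * QmatC s0 A z p.2) a b)
          = fun n => QmatC s0 A z (n+1) a b from funext fun n => by rw [hSn n]]
        exact (summable_nat_add_iff 1).mpr (hQs a b)
      rw [Summable.tsum_eq_zero_add hfs]
      rw [show (∑ p ∈ Finset.HasAntidiagonal.antidiagonal 0, EmatC s0 A z p.1 * QmatC s0 A z p.2) a b = 0 from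
        by rw [hS0]; rfl, zero_add]
      rw [tsum_congr fun n => show
        (∑ p ∈ Finset.HasAntidiagonal.antidiagonal (n+1), EmatC s0 A z p.1 * QmatC s0 A z p.2) a b
          = QmatC s0 A z (n+1) a b from by rw [hSn n]]
      have hsplit := Summable.tsum_eq_zero_add (hQs a b)
      have h1 : QmatC s0 A z 0 a b = (1 : Matrix (Fin s0) (Fin s0) ℂ) a b := by
        rw [QmatC_zero A z]
      rw [show N1C s0 A z a b = ∑' n, QmatC s0 A z n a b from rfl, hsplit, h1]
      ring
    ext a b
    rw [Matrix.sub_mul, Matrix.one_mul, Matrix.sub_apply, hHN a b]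
    ring
  have hNK : N1C s0 A z * (1 - H1C s0 A z) = 1 := mul_eq_one_comm.mp key
  -- final algebra
  intro w hw
  have hC : CmatC s0 A z w
      = w⁻¹ • AstarC s0 A z (-1) + AstarC s0 A z 0 + w • AstarC s0 A z 1 := by
    ext a b
    simp only [CmatC, AstarC, sum_Hs, Matrix.add_apply, Matrix.smul_apply, Matrix.map_apply,
      smul_eq_mul, zpow_zero, zpow_one, zpow_neg, one_mul]
    ring
  rw [hC, hG1, hR1]
  have hKN' : ∀ X : Matrix (Fin s0) (Fin s0) ℂ,
      (1 - H1C s0 A z) * (N1C s0 A z * X) = X := fun X => by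
    rw [← Matrix.mul_assoc, key, Matrix.one_mul]
  have hNK2 : ∀ X : Matrix (Fin s0) (Fin s0) ℂ,
      N1C s0 A z * ((1 - H1C s0 A z) * X) = X := fun X => by
    rw [← Matrix.mul_assoc, hNK, Matrix.one_mul]
  have hH1 : H1C s0 A z
      = AstarC s0 A z 0 + AstarC s0 A z 1 * (N1C s0 A z * AstarC s0 A z (-1)) := by
    rw [show H1C s0 A z
      = AstarC s0 A z 0 + AstarC s0 A z 1 * N1C s0 A z * AstarC s0 A z (-1) from rfl,
      Matrix.mul_assoc]
  have e1 : (w⁻¹ • (1 : Matrix (Fin s0) (Fin s0) ℂ) - AstarC s0 A z 1 * N1C s0 A z) *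
        (1 - H1C s0 A z)
      = w⁻¹ • (1 - H1C s0 A z) - AstarC s0 A z 1 := by
    rw [sub_mul, smul_mul_assoc, one_mul, Matrix.mul_assoc, hNK, mul_one]
  have e2 : (w⁻¹ • (1 - H1C s0 A z) - AstarC s0 A z 1) *
        (w • (1 : Matrix (Fin s0) (Fin s0) ℂ) - N1C s0 A z * AstarC s0 A z (-1))
      = (1 - H1C s0 A z) - w⁻¹ • AstarC s0 A z (-1)
        - (w • AstarC s0 A z 1 - AstarC s0 A z 1 * (N1C s0 A z * AstarC s0 A z (-1))) := by
    rw [sub_mul, mul_sub, mul_sub]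
    simp only [smul_mul_assoc, mul_smul_comm, mul_one, smul_smul, inv_mul_cancel₀ hw, mul_inv_cancel₀ hw,
      one_smul, hKN']
  rw [e1, e2, hH1]
  abel
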